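/- arXiv:2005.07556 — 2 statements merged into one kernel-verified Lean document; each statement's English description precedes it below -/
import Mathlib

section
/- Let X = (X₁,…,X_d) be a strict row contraction of n×n complex matrices and let Y ∈ M_{s×t}(M_n(ℂ)) be an s×t block matrix each of whose n×n blocks lies in alg_X. Then P_X ⊗ I_s − (I_n ⊗ Y)·(P_X ⊗ I_t)·(I_n ⊗ Y*) is positive semidefinite if and only if ‖(P_X^{†/2} ⊗ I_s)·(I_n ⊗ Y)·(P_X^{1/2} ⊗ I_t)‖ ≤ 1 in operator norm. -/
/-!
Common definitions: the ψ-involution, `vec`, the elementary Pick matrix, the Choi matrix,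
Kronecker-product helpers with right-associated index types, the boomerang matrices, the
commutation matrix, and the Moore–Penrose predicate.
-/

open Matrix Filter
open scoped Kronecker Matrix.Norms.L2Operator ComplexOrder

noncomputable section

/-- Square `n × n` complex matrices. -/
abbrev Mat (n : ℕ) := Matrix (Fin n) (Fin n) ℂ

/-- Entrywise complex conjugate of a matrix. -/
def conjM {m k : Type*} (A : Matrix m k ℂ) : Matrix m k ℂ := A.map (starRingEnd ℂ)

/-- `vec A` stacks the columns of `A`: the slot `(j, i)` (column `j`, row `i`) holds `A i j`. -/
def vecM (n : ℕ) (A : Mat n) : Matrix (Fin n × Fin n) Unit ℂ := Matrix.of fun p _ => A p.2 p.1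

/-- The `ψ`-involution on `M_{n²}(ℂ)`: the linear map determined on matrix units by
`ψ(E_{ij} ⊗ E_{kℓ}) = E_{ℓj} ⊗ E_{ki}`, equivalently `ψ(A ⊗ B) = vec(B)·vec(A)ᵀ`. -/
def psi (n : ℕ) (U : Matrix (Fin n × Fin n) (Fin n × Fin n) ℂ) :
    Matrix (Fin n × Fin n) (Fin n × Fin n) ℂ :=
  Matrix.of fun p q => U (q.2, p.2) (q.1, p.1)

/-- `X` is a strict row contraction: `‖Σᵢ Xᵢ Xᵢ*‖ < 1` in the L² operator norm. -/
def StrictRowContraction {n : ℕ} {ι : Type*} [Fintype ι] (X : ι → Mat n) : Prop :=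
  ‖∑ i, X i * (X i)ᴴ‖ < 1

/-- The elementary Pick matrix `P_X = ψ((I_{n²} − Σᵢ conj(Xᵢ) ⊗ Xᵢ)⁻¹)`. -/
def pick {n : ℕ} {ι : Type*} [Fintype ι] (X : ι → Mat n) :
    Matrix (Fin n × Fin n) (Fin n × Fin n) ℂ :=
  psi n ((1 - ∑ i, conjM (X i) ⊗ₖ X i)⁻¹)

/-- The Choi matrix `𝔠_n = Σ_{i,j} E_{ij} ⊗ E_{ij} ∈ M_{n²}(ℂ)`. -/
def choiM (n : ℕ) : Matrix (Fin n × Fin n) (Fin n × Fin n) ℂ :=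
  ∑ i : Fin n, ∑ j : Fin n, single i j (1 : ℂ) ⊗ₖ single i j (1 : ℂ)

/-- `X^w = X_{i₁} ⋯ X_{i_k}` for a word `w = i₁⋯i_k` in the free monoid. -/
def wordProd {n : ℕ} {ι : Type*} (X : ι → Mat n) (w : List ι) : Mat n := (w.map X).prod

/-- Kronecker product `A ⊗ C` where `A` carries a product index, with the resulting
index types flattened right-associatively (`(a × b) × c ↦ a × (b × c)`). -/
def krA {a b c a' b' c' : Type*} (A : Matrix (a × b) (a' × b') ℂ) (C : Matrix c c' ℂ) :
    Matrix (a × b × c) (a' × b' × c') ℂ :=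
  Matrix.of fun p q => A (p.1, p.2.1) (q.1, q.2.1) * C p.2.2 q.2.2

/-- Kronecker product `M ⊗ C` where `M` carries a triple product index, flattened
right-associatively. -/
def krT {a b c e a' b' c' e' : Type*} (M : Matrix (a × b × c) (a' × b' × c') ℂ)
    (C : Matrix e e' ℂ) : Matrix (a × b × c × e) (a' × b' × c' × e') ℂ :=
  Matrix.of fun p q => M (p.1, p.2.1, p.2.2.1) (q.1, q.2.1, q.2.2.1) * C p.2.2.2 q.2.2.2

/-- Triple Kronecker product `A ⊗ B ⊗ C` with right-associated index types. -/
def kr3 {a b c a' b' c' : Type*} (A : Matrix a a' ℂ) (B : Matrix b b' ℂ) (C : Matrix c c' ℂ) :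
    Matrix (a × b × c) (a' × b' × c') ℂ :=
  Matrix.of fun p q => A p.1 q.1 * B p.2.1 q.2.1 * C p.2.2 q.2.2

/-- The boomerang matrix `B̆ = Σ_{i,j} e_i ⊗ e_j ⊗ E_{ij} ∈ M_{n³×n}(ℂ)`:
its entry at row `(i, j, k)`, column `ℓ` is `δ_{k i} δ_{ℓ j}`. -/
def boom (n : ℕ) : Matrix (Fin n × Fin n × Fin n) (Fin n) ℂ :=
  Matrix.of fun p l => if p.2.2 = p.1 ∧ l = p.2.1 then 1 else 0

/-- The commutation (permutation) matrix `Q_{n,r}`, satisfying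
`Q_{n,r} (U ⊗ V) Q_{n,r}ᵀ = V ⊗ U` for `U ∈ M_n`, `V ∈ M_r`. -/
def commMat (n r : ℕ) : Matrix (Fin r × Fin n) (Fin n × Fin r) ℂ :=
  Matrix.of fun p q => if p.2 = q.1 ∧ p.1 = q.2 then 1 else 0

/-- `Σ_{i,j} e_i ⊗ e_j ⊗ I_r ⊗ E_{ij}`: its entry at row `(i, j, a, k)`, column `(b, ℓ)`
is `δ_{k i} δ_{ℓ j} δ_{a b}`. -/
def preBoom (n r : ℕ) : Matrix (Fin n × Fin n × Fin r × Fin n) (Fin r × Fin n) ℂ :=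
  Matrix.of fun p q => if p.2.2.2 = p.1 ∧ q.2 = p.2.1 ∧ p.2.2.1 = q.1 then 1 else 0

/-- The ampliated boomerang matrix `B̆_r = (Σ_{i,j} e_i ⊗ e_j ⊗ I_r ⊗ E_{ij}) · Q_{n,r}`. -/
def boomAmp (n r : ℕ) : Matrix (Fin n × Fin n × Fin r × Fin n) (Fin n × Fin r) ℂ :=
  preBoom n r * commMat n r

/-- `B` is the Moore–Penrose pseudoinverse of `A` (the four Penrose conditions). -/
structure IsMoorePenroseInv {m k : Type*} [Fintype m] [Fintype k]
    (A : Matrix m k ℂ) (B : Matrix k m ℂ) : Prop where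
  mul_inv_mul : A * B * A = A
  inv_mul_inv : B * A * B = B
  hermitian_mul_inv : (A * B)ᴴ = A * B
  hermitian_inv_mul : (B * A)ᴴ = B * A

/-- The positive semidefinite square root of a positive semidefinite matrix (the definition
`Matrix.PosSemidef.sqrt` of the older Mathlib, removed since). -/
def Matrix.PosSemidef.sqrt {n 𝕜 : Type*} [Fintype n] [RCLike 𝕜] [DecidableEq n]
    {A : Matrix n n 𝕜} (hA : A.PosSemidef) : Matrix n n 𝕜 :=
  hA.1.eigenvectorUnitary.1 * diagonal ((↑) ∘ (√·) ∘ hA.1.eigenvalues) *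
    (star hA.1.eigenvectorUnitary : Matrix n n 𝕜)

lemma psd_sqrt_conjT {n 𝕜 : Type*} [Fintype n] [RCLike 𝕜] [DecidableEq n]
    {A : Matrix n n 𝕜} (hA : A.PosSemidef) : hA.sqrtᴴ = hA.sqrt := by
  have hd : star (((↑) ∘ (√·) ∘ hA.1.eigenvalues : n → 𝕜))
      = ((↑) ∘ (√·) ∘ hA.1.eigenvalues : n → 𝕜) := by
    funext i
    simp
  rw [Matrix.PosSemidef.sqrt, Matrix.conjTranspose_mul, Matrix.conjTranspose_mul,
    Matrix.diagonal_conjTranspose, hd]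
  simp only [← Matrix.star_eq_conjTranspose, Unitary.coe_star, star_star, Matrix.mul_assoc]

lemma psd_sqrt_mul_self {n 𝕜 : Type*} [Fintype n] [RCLike 𝕜] [DecidableEq n]
    {A : Matrix n n 𝕜} (hA : A.PosSemidef) : hA.sqrt * hA.sqrt = A := by
  have hU : (star hA.1.eigenvectorUnitary : Matrix n n 𝕜) * hA.1.eigenvectorUnitary = 1 :=
    Unitary.coe_star_mul_self _
  have hD : diagonal (((↑) ∘ (√·) ∘ hA.1.eigenvalues : n → 𝕜)) *
      diagonal (((↑) ∘ (√·) ∘ hA.1.eigenvalues : n → 𝕜))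
      = diagonal (RCLike.ofReal ∘ hA.1.eigenvalues : n → 𝕜) := by
    rw [diagonal_mul_diagonal]
    congr 1
    funext i
    simp only [Function.comp]
    rw [← RCLike.ofReal_mul, Real.mul_self_sqrt (hA.eigenvalues_nonneg i)]
  conv_rhs => rw [hA.1.spectral_theorem, Unitary.conjStarAlgAut_apply]
  simp only [Matrix.PosSemidef.sqrt, Matrix.mul_assoc]
  rw [← Matrix.mul_assoc (star hA.1.eigenvectorUnitary : Matrix n n 𝕜)
    (hA.1.eigenvectorUnitary : Matrix n n 𝕜), hU, Matrix.one_mul, ← Matrix.mul_assoc _ _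
    (star hA.1.eigenvectorUnitary : Matrix n n 𝕜), hD]

section AuxProof

variable {n r s t d : ℕ}

local notation "M2 " n => Matrix (Fin n × Fin n) (Fin n × Fin n) ℂ

lemma krA_conjT (F : M2 n) :
    (krA F (1 : Matrix (Fin r) (Fin r) ℂ))ᴴ = krA Fᴴ (1 : Matrix (Fin r) (Fin r) ℂ) := by
  ext ⟨i, j, α⟩ ⟨k, l, β⟩
  by_cases h : α = β <;>
    simp [krA, Matrix.conjTranspose_apply, Matrix.one_apply, h, eq_comm]

lemma krA_mul (F G : M2 n) :
    krA F (1 : Matrix (Fin r) (Fin r) ℂ) * krA G (1 : Matrix (Fin r) (Fin r) ℂ)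
      = krA (F * G) (1 : Matrix (Fin r) (Fin r) ℂ) := by
  ext ⟨i, j, α⟩ ⟨k, l, β⟩
  simp only [krA, Matrix.of_apply, Matrix.mul_apply, Fintype.sum_prod_type, Matrix.one_apply,
    mul_ite, mul_one, mul_zero, ite_mul, zero_mul, Finset.sum_ite_eq, Finset.sum_ite_eq',
    Finset.mem_univ, if_true, Finset.sum_mul, Finset.mul_sum]
  by_cases h : α = β <;> simp [h]

lemma krA_sub (F G : M2 n) :
    krA (F - G) (1 : Matrix (Fin r) (Fin r) ℂ)
      = krA F (1 : Matrix (Fin r) (Fin r) ℂ) - krA G (1 : Matrix (Fin r) (Fin r) ℂ) := by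
  ext ⟨i, j, α⟩ ⟨k, l, β⟩
  simp [krA, sub_mul]

lemma krA_one : krA (1 : M2 n) (1 : Matrix (Fin r) (Fin r) ℂ) = 1 := by
  ext ⟨i, j, α⟩ ⟨k, l, β⟩
  by_cases h : (i, j) = (k, l) <;> by_cases h' : α = β <;>
    simp [krA, Matrix.one_apply, h, h', Prod.ext_iff] <;> tauto

lemma krA_zero : krA (0 : M2 n) (1 : Matrix (Fin r) (Fin r) ℂ) = 0 := by
  ext ⟨i, j, α⟩ ⟨k, l, β⟩
  simp [krA]

end AuxProof

section AuxProof2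

variable {n s t : ℕ}

/-- The `(α, β)` block of an `s × t` block matrix. -/
def blk {n s t : ℕ} (Y : Matrix (Fin n × Fin s) (Fin n × Fin t) ℂ) (α : Fin s) (β : Fin t) :
    Mat n := Matrix.of fun a b => Y (a, α) (b, β)

lemma sandwich_apply (F G : Matrix (Fin n × Fin n) (Fin n × Fin n) ℂ)
    (Y : Matrix (Fin n × Fin s) (Fin n × Fin t) ℂ)
    (p : Fin n × Fin n × Fin s) (q : Fin n × Fin n × Fin t) :
    (krA F (1 : Matrix (Fin s) (Fin s) ℂ) * ((1 : Mat n) ⊗ₖ Y) *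
        krA G (1 : Matrix (Fin t) (Fin t) ℂ)) p q
      = (F * ((1 : Mat n) ⊗ₖ blk Y p.2.2 q.2.2) * G) (p.1, p.2.1) (q.1, q.2.1) := by
  obtain ⟨i, j, α⟩ := p
  obtain ⟨k, l, β⟩ := q
  simp only [krA, blk, Matrix.of_apply, Matrix.mul_apply, Fintype.sum_prod_type,
    Matrix.kroneckerMap_apply, Matrix.one_apply, mul_ite, mul_one, mul_zero, ite_mul, zero_mul,
    one_mul, Finset.sum_ite_eq, Finset.sum_ite_eq', Finset.mem_univ, if_true,
    Finset.sum_mul, Finset.mul_sum]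
  refine Finset.sum_congr rfl fun x _ => Finset.sum_congr rfl fun x1 _ =>
    Finset.sum_congr rfl fun x2 _ => Finset.sum_congr rfl fun x3 _ => ?_
  by_cases h : x2 = x <;> simp [h, Finset.sum_ite_eq]

lemma sandwich_eq_zero {F G : Matrix (Fin n × Fin n) (Fin n × Fin n) ℂ}
    {Y : Matrix (Fin n × Fin s) (Fin n × Fin t) ℂ}
    (h : ∀ α β, F * ((1 : Mat n) ⊗ₖ blk Y α β) * G = 0) :
    krA F (1 : Matrix (Fin s) (Fin s) ℂ) * ((1 : Mat n) ⊗ₖ Y) *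
        krA G (1 : Matrix (Fin t) (Fin t) ℂ) = 0 := by
  ext p q
  rw [sandwich_apply, h p.2.2 q.2.2]
  simp

end AuxProof2

section AuxMP

variable {m k : Type*} [Fintype m] [Fintype k]

lemma mp_unique {A : Matrix m k ℂ} {B C : Matrix k m ℂ}
    (hB : IsMoorePenroseInv A B) (hC : IsMoorePenroseInv A C) : B = C := by
  have hAB : A * B = A * C := by
    calc A * B = (A * B)ᴴ := hB.hermitian_mul_inv.symm
    _ = ((A * C) * (A * B))ᴴ := by
        rw [show (A * C) * (A * B) = (A * C * A) * B by simp only [Matrix.mul_assoc],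
          hC.mul_inv_mul]
    _ = (A * B)ᴴ * (A * C)ᴴ := by rw [Matrix.conjTranspose_mul]
    _ = (A * B) * (A * C) := by rw [hB.hermitian_mul_inv, hC.hermitian_mul_inv]
    _ = (A * B * A) * C := by simp only [Matrix.mul_assoc]
    _ = A * C := by rw [hB.mul_inv_mul]
  have hBA : B * A = C * A := by
    calc B * A = (B * A)ᴴ := hB.hermitian_inv_mul.symm
    _ = ((B * A) * (C * A))ᴴ := by
        rw [show (B * A) * (C * A) = B * (A * C * A) by simp only [Matrix.mul_assoc],
          hC.mul_inv_mul]
    _ = (C * A)ᴴ * (B * A)ᴴ := by rw [Matrix.conjTranspose_mul]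
    _ = (C * A) * (B * A) := by rw [hB.hermitian_inv_mul, hC.hermitian_inv_mul]
    _ = C * (A * B * A) := by simp only [Matrix.mul_assoc]
    _ = C * A := by rw [hB.mul_inv_mul]
  calc B = B * A * B := hB.inv_mul_inv.symm
  _ = C * A * B := by rw [hBA]
  _ = C * (A * C) := by rw [Matrix.mul_assoc, hAB]
  _ = C := by rw [← Matrix.mul_assoc, hC.inv_mul_inv]

lemma mp_conjT {A : Matrix m k ℂ} {B : Matrix k m ℂ} (h : IsMoorePenroseInv A B) :
    IsMoorePenroseInv Aᴴ Bᴴ where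
  mul_inv_mul := by
    rw [← Matrix.conjTranspose_mul, ← Matrix.conjTranspose_mul, ← Matrix.mul_assoc,
      h.mul_inv_mul]
  inv_mul_inv := by
    rw [← Matrix.conjTranspose_mul, ← Matrix.conjTranspose_mul, ← Matrix.mul_assoc,
      h.inv_mul_inv]
  hermitian_mul_inv := by
    rw [← Matrix.conjTranspose_mul, Matrix.conjTranspose_conjTranspose, h.hermitian_inv_mul]
  hermitian_inv_mul := by
    rw [← Matrix.conjTranspose_mul, Matrix.conjTranspose_conjTranspose, h.hermitian_mul_inv]

end AuxMP

section AuxPsi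

variable {n d : ℕ}

lemma psi_one_eq : psi n (1 : Matrix (Fin n × Fin n) (Fin n × Fin n) ℂ)
    = vecM n 1 * (vecM n 1)ᴴ := by
  ext ⟨i, j⟩ ⟨k, l⟩
  simp only [psi, vecM, Matrix.of_apply, Matrix.mul_apply, Matrix.conjTranspose_apply,
    Matrix.one_apply, Finset.univ_unique, Finset.sum_singleton, Prod.mk.injEq]
  by_cases h1 : l = k <;> by_cases h2 : j = i <;>
    simp [h1, h2, Matrix.one_apply, Prod.ext_iff]

lemma one_kron_mul_apply (A : Mat n) (M : Matrix (Fin n × Fin n) (Fin n × Fin n) ℂ)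
    (i j c e : Fin n) :
    (((1 : Mat n) ⊗ₖ A) * M) (i, j) (c, e) = ∑ b, A j b * M (i, b) (c, e) := by
  rw [Matrix.mul_apply, Fintype.sum_prod_type_right]
  simp [Matrix.one_apply, ite_mul, zero_mul]

lemma mul_one_kron_conjT_apply (A : Mat n) (M : Matrix (Fin n × Fin n) (Fin n × Fin n) ℂ)
    (i j k l : Fin n) :
    (M * ((1 : Mat n) ⊗ₖ A)ᴴ) (i, j) (k, l) = ∑ e, star (A l e) * M (i, j) (k, e) := by
  rw [Matrix.mul_apply, Fintype.sum_prod_type_right]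
  simp only [Matrix.conjTranspose_apply, Matrix.kroneckerMap_apply, Matrix.one_apply,
    apply_ite (star : ℂ → ℂ), star_zero, star_one, mul_ite, mul_zero, ite_mul, zero_mul,
    one_mul, mul_one, Finset.sum_ite_eq, Finset.sum_ite_eq', Finset.mem_univ, if_true]
  exact Finset.sum_congr rfl fun e _ => mul_comm _ _

lemma psi_kron_mul (A : Mat n) (U : Matrix (Fin n × Fin n) (Fin n × Fin n) ℂ) :
    psi n ((conjM A ⊗ₖ A) * U)
      = ((1 : Mat n) ⊗ₖ A) * psi n U * ((1 : Mat n) ⊗ₖ A)ᴴ := by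
  ext ⟨i, j⟩ ⟨k, l⟩
  have hR : (((1 : Mat n) ⊗ₖ A) * psi n U * ((1 : Mat n) ⊗ₖ A)ᴴ) (i, j) (k, l)
      = ∑ e, star (A l e) * ∑ b, A j b * psi n U (i, b) (k, e) := by
    rw [mul_one_kron_conjT_apply]
    exact Finset.sum_congr rfl fun e _ => by rw [one_kron_mul_apply]
  rw [hR]
  simp only [psi, conjM, Matrix.of_apply, Matrix.mul_apply, Matrix.kroneckerMap_apply,
    Matrix.map_apply, Fintype.sum_prod_type, Finset.mul_sum, starRingEnd_apply]
  exact Finset.sum_congr rfl fun x _ => Finset.sum_congr rfl fun y _ => by ring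

lemma psi_add (U V : Matrix (Fin n × Fin n) (Fin n × Fin n) ℂ) :
    psi n (U + V) = psi n U + psi n V := by
  ext ⟨i, j⟩ ⟨k, l⟩
  simp [psi]

lemma psi_sum {ι : Type*} (f : ι → Matrix (Fin n × Fin n) (Fin n × Fin n) ℂ) (s : Finset ι) :
    psi n (∑ i ∈ s, f i) = ∑ i ∈ s, psi n (f i) := by
  ext ⟨i, j⟩ ⟨k, l⟩
  simp [psi, Matrix.sum_apply]

/-- The fixed-point identity for the Pick matrix, in the invertible case. -/
lemma pick_identity (X : Fin d → Mat n)
    (hu : IsUnit (1 - ∑ i, conjM (X i) ⊗ₖ X i)) :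
    pick X = vecM n 1 * (vecM n 1)ᴴ
      + ∑ i, ((1 : Mat n) ⊗ₖ X i) * pick X * ((1 : Mat n) ⊗ₖ X i)ᴴ := by
  set S := ∑ i, conjM (X i) ⊗ₖ X i with hS
  have hdet : IsUnit (1 - S).det := (Matrix.isUnit_iff_isUnit_det _).mp hu
  set T := (1 - S)⁻¹ with hT
  have h1 : (1 - S) * T = 1 := Matrix.mul_nonsing_inv _ hdet
  have h3 : T - S * T = 1 := by rw [Matrix.sub_mul, Matrix.one_mul] at h1; exact h1
  have h2 : T = 1 + S * T := by rw [← h3]; abel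
  calc pick X = psi n T := rfl
  _ = psi n (1 + S * T) := by rw [← h2]
  _ = psi n 1 + psi n (S * T) := psi_add _ _
  _ = vecM n 1 * (vecM n 1)ᴴ
      + ∑ i, ((1 : Mat n) ⊗ₖ X i) * pick X * ((1 : Mat n) ⊗ₖ X i)ᴴ := by
      rw [psi_one_eq, hS, Finset.sum_mul, psi_sum]
      congr 1
      exact Finset.sum_congr rfl fun i _ => psi_kron_mul (X i) _

end AuxPsi

section AuxNorm

variable {m k : Type*} [Fintype m] [Fintype k] [DecidableEq m] [DecidableEq k]

lemma eq_zero_of_mulVec_eq_zero {M : Matrix m k ℂ} (h : ∀ v, M *ᵥ v = 0) : M = 0 := by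
  ext i j
  have := congrFun (h (Pi.single j 1)) i
  simpa using this

lemma dot_self_complex (w : m → ℂ) :
    star w ⬝ᵥ w = ((‖(WithLp.equiv 2 (m → ℂ)).symm w‖ : ℝ) ^ 2 : ℂ) := by
  rw [← Complex.ofReal_pow, EuclideanSpace.norm_eq, Real.sq_sqrt (by positivity)]
  push_cast
  simp only [dotProduct, Pi.star_apply, WithLp.equiv_symm_apply, WithLp.ofLp_toLp]
  refine Finset.sum_congr rfl fun i _ => ?_
  rw [← Complex.ofReal_pow, Complex.sq_norm, Complex.normSq_eq_conj_mul_self, Complex.star_def]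

/-- `‖C‖ ≤ 1` iff `1 - C Cᴴ` is PSD, for rectangular `C`. -/
lemma norm_le_one_iff_psd (C : Matrix m k ℂ) :
    (1 - C * Cᴴ).PosSemidef ↔ ‖C‖ ≤ 1 := by
  have hdot : ∀ x : m → ℂ, star x ⬝ᵥ ((1 - C * Cᴴ) *ᵥ x)
      = star x ⬝ᵥ x - star (Cᴴ *ᵥ x) ⬝ᵥ (Cᴴ *ᵥ x) := by
    intro x
    rw [Matrix.sub_mulVec, dotProduct_sub, Matrix.one_mulVec]
    congr 1
    rw [← Matrix.mulVec_mulVec, Matrix.dotProduct_mulVec, Matrix.star_mulVec,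
      Matrix.conjTranspose_conjTranspose]
  constructor
  · intro h
    rw [← Matrix.l2_opNorm_conjTranspose, Matrix.l2_opNorm_def]
    refine ContinuousLinearMap.opNorm_le_bound _ zero_le_one fun x => ?_
    rw [one_mul, LinearEquiv.trans_apply, LinearMap.coe_toContinuousLinearMap',
      Matrix.toEuclideanLin_apply]
    have h2 := h.dotProduct_mulVec_nonneg ((WithLp.equiv 2 (m → ℂ)) x)
    rw [hdot, dot_self_complex, dot_self_complex] at h2
    rw [← Complex.ofReal_pow, ← Complex.ofReal_pow, sub_nonneg, Complex.real_le_real] at h2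
    have hx : ((WithLp.equiv 2 (m → ℂ)).symm ((WithLp.equiv 2 (m → ℂ)) x)) = x := by simp
    rw [hx] at h2
    change ‖WithLp.toLp 2 (Cᴴ *ᵥ x.ofLp)‖ ^ 2 ≤ ‖x‖ ^ 2 at h2
    nlinarith [norm_nonneg x, norm_nonneg (WithLp.toLp 2 (Cᴴ *ᵥ x.ofLp))]
  · intro h
    refine Matrix.PosSemidef.of_dotProduct_mulVec_nonneg ?_ ?_
    · exact (Matrix.isHermitian_one).sub (Matrix.isHermitian_mul_conjTranspose_self C)
    · intro x
      rw [hdot, dot_self_complex, dot_self_complex]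
      rw [← Complex.ofReal_pow, ← Complex.ofReal_pow, sub_nonneg, Complex.real_le_real]
      have hb := Matrix.l2_opNorm_mulVec Cᴴ ((WithLp.equiv 2 (m → ℂ)).symm x)
      have hC : ‖Cᴴ‖ ≤ 1 := by rw [Matrix.l2_opNorm_conjTranspose]; exact h
      have h0 : (0:ℝ) ≤ ‖(WithLp.equiv 2 (m → ℂ)).symm x‖ := norm_nonneg _
      have h1 : ‖(EuclideanSpace.equiv k ℂ).symm
          (Cᴴ *ᵥ ((WithLp.equiv 2 (m → ℂ)).symm x : EuclideanSpace ℂ m))‖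
            ≤ ‖(WithLp.equiv 2 (m → ℂ)).symm x‖ := by
        calc _ ≤ ‖Cᴴ‖ * ‖(WithLp.equiv 2 (m → ℂ)).symm x‖ := hb
        _ ≤ 1 * ‖(WithLp.equiv 2 (m → ℂ)).symm x‖ := by nlinarith
        _ = _ := one_mul _
      have h1' : ‖(WithLp.equiv 2 (k → ℂ)).symm (Cᴴ *ᵥ x)‖
          ≤ ‖(WithLp.equiv 2 (m → ℂ)).symm x‖ := h1
      nlinarith [norm_nonneg ((WithLp.equiv 2 (k → ℂ)).symm (Cᴴ *ᵥ x))]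

end AuxNorm

section AuxMisc

lemma sum_mulVec' {m k ι : Type*} [Fintype m] [Fintype k] (s : Finset ι)
    (f : ι → Matrix m k ℂ) (v : k → ℂ) :
    (∑ i ∈ s, f i) *ᵥ v = ∑ i ∈ s, f i *ᵥ v := by
  ext j
  simp only [Matrix.mulVec, Matrix.sum_apply, dotProduct, Finset.sum_apply, Finset.sum_mul]
  rw [Finset.sum_comm]

lemma dotProduct_sum' {m ι : Type*} [Fintype m] (v : m → ℂ) (s : Finset ι)
    (f : ι → m → ℂ) : v ⬝ᵥ (∑ i ∈ s, f i) = ∑ i ∈ s, v ⬝ᵥ f i := by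
  simp only [dotProduct, Finset.sum_apply, Finset.mul_sum]
  rw [Finset.sum_comm]

lemma posSemidef_zero' {m : Type*} [Fintype m] : (0 : Matrix m m ℂ).PosSemidef :=
  Matrix.PosSemidef.of_dotProduct_mulVec_nonneg Matrix.isHermitian_zero fun x => by simp

end AuxMisc

/-- Let `X` be a strict row contraction and `Y` an `s×t` block matrix all
of whose `n×n` blocks lie in `alg_X` (the unital subalgebra generated by `X₁,…,X_d`).  Then
`P_X ⊗ I_s − (I_n ⊗ Y)·(P_X ⊗ I_t)·(I_n ⊗ Y*)` is positive semidefinite if and only if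
`‖(P_X^{†/2} ⊗ I_s)·(I_n ⊗ Y)·(P_X^{1/2} ⊗ I_t)‖ ≤ 1` in the operator norm.
Here `hP.sqrt` is the positive semidefinite square root `P_X^{1/2}` and `B` is its
Moore–Penrose pseudoinverse `P_X^{†/2}`. -/
theorem pick_posSemidef_iff_norm_le_one {n d s t : ℕ} (X : Fin d → Mat n)
    (hX : StrictRowContraction X)
    (Y : Matrix (Fin n × Fin s) (Fin n × Fin t) ℂ)
    (hY : ∀ (i : Fin s) (j : Fin t),
      (Matrix.of fun a b => Y (a, i) (b, j)) ∈ Algebra.adjoin ℂ (Set.range X))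
    (hP : (pick X).PosSemidef)
    (B : Matrix (Fin n × Fin n) (Fin n × Fin n) ℂ)
    (hB : IsMoorePenroseInv hP.sqrt B) :
    (krA (pick X) (1 : Matrix (Fin s) (Fin s) ℂ) -
        ((1 : Mat n) ⊗ₖ Y) * krA (pick X) (1 : Matrix (Fin t) (Fin t) ℂ) *
          ((1 : Mat n) ⊗ₖ Y)ᴴ).PosSemidef ↔
      ‖krA B (1 : Matrix (Fin s) (Fin s) ℂ) * ((1 : Mat n) ⊗ₖ Y) *
          krA hP.sqrt (1 : Matrix (Fin t) (Fin t) ℂ)‖ ≤ 1 := by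
  classical
  set R := hP.sqrt with hRdef
  have hRH : Rᴴ = R := psd_sqrt_conjT hP
  have hRR : R * R = pick X := psd_sqrt_mul_self hP
  have hPH : (pick X)ᴴ = pick X := hP.1
  have hBH : Bᴴ = B := by
    have h1 : IsMoorePenroseInv R Bᴴ := by
      have h2 := mp_conjT hB
      rwa [hRH] at h2
    exact mp_unique h1 hB
  set π := R * B with hπ
  have hπH : πᴴ = π := hB.hermitian_mul_inv
  have hBRπ : B * R = π := by
    calc B * R = Bᴴ * Rᴴ := by rw [hBH, hRH]
    _ = (R * B)ᴴ := (Matrix.conjTranspose_mul R B).symm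
    _ = π := hπH
  have hππ : π * π = π := by
    calc π * π = (R * B * R) * B := by simp only [hπ, Matrix.mul_assoc]
    _ = π := by rw [hB.mul_inv_mul]
  have hπR : π * R = R := by rw [hπ]; exact hB.mul_inv_mul
  have hRπ : R * π = R := by
    calc R * π = Rᴴ * πᴴ := by rw [hRH, hπH]
    _ = (π * R)ᴴ := (Matrix.conjTranspose_mul π R).symm
    _ = Rᴴ := by rw [hπR]
    _ = R := hRH
  have hPp : pick X * π = pick X := by rw [← hRR, Matrix.mul_assoc, hRπ]
  have hPB : pick X * B = R := by rw [← hRR, Matrix.mul_assoc, ← hπ, hRπ]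
  have hπPB2 : pick X * (B * B) = π := by
    rw [← Matrix.mul_assoc, hPB, ← hπ]
  have hBPB : B * pick X * B = π := by
    rw [← hRR]
    calc B * (R * R) * B = (B * R) * (R * B) := by simp only [Matrix.mul_assoc]
    _ = π * π := by rw [hBRπ, ← hπ]
    _ = π := hππ
  by_cases hu : IsUnit (1 - ∑ i, conjM (X i) ⊗ₖ X i)
  case neg =>
    have hP0 : pick X = 0 := by
      have hdet : ¬ IsUnit (1 - ∑ i, conjM (X i) ⊗ₖ X i).det := fun hd =>
        hu ((Matrix.isUnit_iff_isUnit_det _).mpr hd)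
      show psi n _ = 0
      rw [Matrix.nonsing_inv_apply_not_isUnit _ hdet]
      ext ⟨i, j⟩ ⟨k, l⟩
      simp [psi]
    have hR0 : R = 0 := by
      apply _root_.eq_zero_of_mulVec_eq_zero
      intro v
      have h1 : star (R *ᵥ v) ⬝ᵥ (R *ᵥ v) = 0 := by
        calc star (R *ᵥ v) ⬝ᵥ (R *ᵥ v) = (star v ᵥ* Rᴴ) ⬝ᵥ (R *ᵥ v) := by
              rw [Matrix.star_mulVec]
        _ = star v ⬝ᵥ (Rᴴ *ᵥ (R *ᵥ v)) := (Matrix.dotProduct_mulVec _ _ _).symm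
        _ = star v ⬝ᵥ ((Rᴴ * R) *ᵥ v) := by rw [Matrix.mulVec_mulVec]
        _ = 0 := by rw [hRH, hRR, hP0]; simp
      exact dotProduct_star_self_eq_zero.mp h1
    have hB0 : B = 0 := by
      have h1 := hB.inv_mul_inv
      rw [hR0] at h1
      simpa using h1.symm
    rw [hP0, hR0, hB0, krA_zero, krA_zero]
    refine iff_of_true ?_ ?_
    · simpa using posSemidef_zero'
    · simp
  case pos =>
    have hfix := pick_identity X hu
    -- kernel propagation
    have hker : ∀ (i : Fin d) (v : Fin n × Fin n → ℂ), pick X *ᵥ v = 0 →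
        pick X *ᵥ (((1 : Mat n) ⊗ₖ X i)ᴴ *ᵥ v) = 0 := by
      intro i v hv
      have hdotQ : ∀ j : Fin d, star v ⬝ᵥ ((((1 : Mat n) ⊗ₖ X j) * pick X *
          ((1 : Mat n) ⊗ₖ X j)ᴴ) *ᵥ v)
          = star (((1 : Mat n) ⊗ₖ X j)ᴴ *ᵥ v) ⬝ᵥ (pick X *ᵥ (((1 : Mat n) ⊗ₖ X j)ᴴ *ᵥ v)) := by
        intro j
        rw [← Matrix.mulVec_mulVec, ← Matrix.mulVec_mulVec, Matrix.dotProduct_mulVec,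
          Matrix.star_mulVec, Matrix.conjTranspose_conjTranspose]
      have hQ : ∀ j : Fin d, (0:ℂ) ≤ star v ⬝ᵥ ((((1 : Mat n) ⊗ₖ X j) * pick X *
          ((1 : Mat n) ⊗ₖ X j)ᴴ) *ᵥ v) :=
        fun j => (hP.mul_mul_conjTranspose_same _).dotProduct_mulVec_nonneg v
      have hWpsd : (vecM n 1 * (vecM n 1)ᴴ).PosSemidef := by
        refine Matrix.PosSemidef.of_dotProduct_mulVec_nonneg
            (Matrix.isHermitian_mul_conjTranspose_self _) fun x => ?_
        rw [← Matrix.mulVec_mulVec, Matrix.dotProduct_mulVec]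
        have h4 : star ((vecM n 1)ᴴ *ᵥ x) = star x ᵥ* vecM n 1 := by
          rw [Matrix.star_mulVec, Matrix.conjTranspose_conjTranspose]
        rw [← h4]
        exact dotProduct_star_self_nonneg _
      have h0 : star v ⬝ᵥ (pick X *ᵥ v) = 0 := by rw [hv]; simp
      rw [hfix, Matrix.add_mulVec, dotProduct_add, sum_mulVec', dotProduct_sum'] at h0
      have hsum0 : ∑ j : Fin d, star v ⬝ᵥ ((((1 : Mat n) ⊗ₖ X j) * pick X *
          ((1 : Mat n) ⊗ₖ X j)ᴴ) *ᵥ v) = 0 := by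
        have hs_nonneg : (0:ℂ) ≤ ∑ j : Fin d, star v ⬝ᵥ ((((1 : Mat n) ⊗ₖ X j) * pick X *
            ((1 : Mat n) ⊗ₖ X j)ᴴ) *ᵥ v) := Finset.sum_nonneg fun j _ => hQ j
        have hW0 : (0:ℂ) ≤ star v ⬝ᵥ ((vecM n 1 * (vecM n 1)ᴴ) *ᵥ v) := hWpsd.dotProduct_mulVec_nonneg v
        have hle : ∑ j : Fin d, star v ⬝ᵥ ((((1 : Mat n) ⊗ₖ X j) * pick X *
            ((1 : Mat n) ⊗ₖ X j)ᴴ) *ᵥ v) ≤ 0 := by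
          rw [← h0]
          exact le_add_of_nonneg_left hW0
        exact le_antisymm hle hs_nonneg
      have hterm := (Finset.sum_eq_zero_iff_of_nonneg (fun j _ => hQ j)).mp hsum0 i
        (Finset.mem_univ i)
      rw [hdotQ i] at hterm
      exact (hP.dotProduct_mulVec_zero_iff _).mp hterm
    have hP1π : pick X * (1 - π) = 0 := by
      rw [Matrix.mul_sub, Matrix.mul_one, hPp, sub_self]
    have hkill : ∀ i : Fin d, (1 - π) * ((1 : Mat n) ⊗ₖ X i) * pick X = 0 := by
      intro i
      have h1 : pick X * ((1 : Mat n) ⊗ₖ X i)ᴴ * (1 - π) = 0 := by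
        apply _root_.eq_zero_of_mulVec_eq_zero
        intro v
        have hv : pick X *ᵥ ((1 - π) *ᵥ v) = 0 := by
          rw [Matrix.mulVec_mulVec, hP1π, Matrix.zero_mulVec]
        have h2 := hker i ((1 - π) *ᵥ v) hv
        calc (pick X * ((1 : Mat n) ⊗ₖ X i)ᴴ * (1 - π)) *ᵥ v
            = pick X *ᵥ (((1 : Mat n) ⊗ₖ X i)ᴴ *ᵥ ((1 - π) *ᵥ v)) := by
              rw [Matrix.mulVec_mulVec, Matrix.mulVec_mulVec]
        _ = 0 := h2
      have h2 := congrArg Matrix.conjTranspose h1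
      rw [Matrix.conjTranspose_zero, Matrix.conjTranspose_mul, Matrix.conjTranspose_mul,
        Matrix.conjTranspose_conjTranspose, Matrix.conjTranspose_sub,
        Matrix.conjTranspose_one, hπH, hPH] at h2
      rw [Matrix.mul_assoc]
      exact h2
    -- the algebra-invariance property
    have hkey : ∀ a ∈ Algebra.adjoin ℂ (Set.range X),
        (1 - π) * ((1 : Mat n) ⊗ₖ a) * π = 0 := by
      intro a ha
      induction ha using Algebra.adjoin_induction with
      | mem x hx =>
          obtain ⟨i, rfl⟩ := hx
          have e : (1 - π) * ((1 : Mat n) ⊗ₖ X i) * π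
              = ((1 - π) * ((1 : Mat n) ⊗ₖ X i) * pick X) * (B * B) := by
            rw [← hπPB2]
            simp only [Matrix.mul_assoc]
          rw [e, hkill i, Matrix.zero_mul]
      | algebraMap r =>
          have e : ((1 : Mat n) ⊗ₖ (algebraMap ℂ (Mat n) r)) = r • 1 := by
            rw [Algebra.algebraMap_eq_smul_one, Matrix.kronecker_smul,
              Matrix.one_kronecker_one]
          rw [e, Matrix.mul_smul, Matrix.mul_one, Matrix.smul_mul, Matrix.sub_mul,
            Matrix.one_mul, hππ, sub_self, smul_zero]
      | add x y hx hy ihx ihy =>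
          rw [Matrix.kronecker_add, Matrix.mul_add, Matrix.add_mul, ihx, ihy, add_zero]
      | mul x y hx hy ihx ihy =>
          have hxy : (1 : Mat n) ⊗ₖ (x * y) = ((1 : Mat n) ⊗ₖ x) * ((1 : Mat n) ⊗ₖ y) := by
            rw [← Matrix.mul_kronecker_mul, Matrix.one_mul]
          have e : (1 - π) * ((1 : Mat n) ⊗ₖ (x * y)) * π
              = ((1 - π) * ((1 : Mat n) ⊗ₖ x) * π) * (((1 : Mat n) ⊗ₖ y) * π)
                + ((1 - π) * ((1 : Mat n) ⊗ₖ x)) * ((1 - π) * ((1 : Mat n) ⊗ₖ y) * π) := by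
            rw [hxy]; noncomm_ring
          rw [e, ihx, ihy, Matrix.zero_mul, Matrix.mul_zero, add_zero]
    -- block-level kill
    have hblk : ∀ (α : Fin s) (β : Fin t),
        (1 - π) * ((1 : Mat n) ⊗ₖ blk Y α β) * R = 0 := by
      intro α β
      have h1 := hkey (blk Y α β) (hY α β)
      calc (1 - π) * ((1 : Mat n) ⊗ₖ blk Y α β) * R
          = ((1 - π) * ((1 : Mat n) ⊗ₖ blk Y α β) * π) * R := by
            conv_lhs => rw [← hπR]
            simp only [Matrix.mul_assoc]
      _ = 0 := by rw [h1, Matrix.zero_mul]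
    have hkeyN : krA (1 - π) (1 : Matrix (Fin s) (Fin s) ℂ) * ((1 : Mat n) ⊗ₖ Y) *
        krA R (1 : Matrix (Fin t) (Fin t) ℂ) = 0 := sandwich_eq_zero hblk
    have hNR : krA π (1 : Matrix (Fin s) (Fin s) ℂ) * (((1 : Mat n) ⊗ₖ Y) *
        krA R (1 : Matrix (Fin t) (Fin t) ℂ))
        = ((1 : Mat n) ⊗ₖ Y) * krA R (1 : Matrix (Fin t) (Fin t) ℂ) := by
      have expand : krA (1 - π) (1 : Matrix (Fin s) (Fin s) ℂ)
          = 1 - krA π (1 : Matrix (Fin s) (Fin s) ℂ) := by rw [krA_sub, krA_one]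
      have h2 : (1 - krA π (1 : Matrix (Fin s) (Fin s) ℂ)) * (((1 : Mat n) ⊗ₖ Y) *
          krA R (1 : Matrix (Fin t) (Fin t) ℂ)) = 0 := by
        rw [← expand, ← Matrix.mul_assoc]
        exact hkeyN
      rw [Matrix.sub_mul, Matrix.one_mul, sub_eq_zero] at h2
      exact h2.symm
    -- assemble
    rw [← norm_le_one_iff_psd]
    have hCH : (krA B (1 : Matrix (Fin s) (Fin s) ℂ) * ((1 : Mat n) ⊗ₖ Y) *
        krA R (1 : Matrix (Fin t) (Fin t) ℂ))ᴴ
        = krA R (1 : Matrix (Fin t) (Fin t) ℂ) * ((1 : Mat n) ⊗ₖ Y)ᴴ *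
          krA B (1 : Matrix (Fin s) (Fin s) ℂ) := by
      rw [Matrix.conjTranspose_mul, Matrix.conjTranspose_mul, krA_conjT, krA_conjT,
        hRH, hBH]
      simp only [Matrix.mul_assoc]
    constructor
    · intro h
      have h2 := h.mul_mul_conjTranspose_same (krA B (1 : Matrix (Fin s) (Fin s) ℂ))
      have e : krA B (1 : Matrix (Fin s) (Fin s) ℂ) *
          (krA (pick X) (1 : Matrix (Fin s) (Fin s) ℂ) -
            ((1 : Mat n) ⊗ₖ Y) * krA (pick X) (1 : Matrix (Fin t) (Fin t) ℂ) *
              ((1 : Mat n) ⊗ₖ Y)ᴴ) * (krA B (1 : Matrix (Fin s) (Fin s) ℂ))ᴴ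
          = krA π (1 : Matrix (Fin s) (Fin s) ℂ) -
            (krA B (1 : Matrix (Fin s) (Fin s) ℂ) * ((1 : Mat n) ⊗ₖ Y) *
              krA R (1 : Matrix (Fin t) (Fin t) ℂ)) *
            (krA B (1 : Matrix (Fin s) (Fin s) ℂ) * ((1 : Mat n) ⊗ₖ Y) *
              krA R (1 : Matrix (Fin t) (Fin t) ℂ))ᴴ := by
        rw [hCH, krA_conjT, hBH, Matrix.mul_sub, Matrix.sub_mul]
        congr 1
        · rw [krA_mul, krA_mul, hBPB]
        · rw [show pick X = R * R from hRR.symm, ← krA_mul]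
          simp only [Matrix.mul_assoc]
      rw [e] at h2
      have hpsd1 : (krA (1 - π) (1 : Matrix (Fin s) (Fin s) ℂ)).PosSemidef := by
        have h1π : (1 - π) * (1 - π) = 1 - π := by
          rw [Matrix.sub_mul, Matrix.one_mul, Matrix.mul_sub, Matrix.mul_one, hππ]
          abel
        suffices hsuf : (krA (1 - π) (1 : Matrix (Fin s) (Fin s) ℂ))ᴴ *
            krA (1 - π) (1 : Matrix (Fin s) (Fin s) ℂ) = krA (1 - π) (1 : Matrix (Fin s) (Fin s) ℂ) by
          rw [← hsuf]
          exact Matrix.posSemidef_conjTranspose_mul_self _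
        rw [krA_conjT, krA_mul]
        rw [Matrix.conjTranspose_sub, Matrix.conjTranspose_one, hπH, h1π]
      have edec : (1 : Matrix (Fin n × Fin n × Fin s) (Fin n × Fin n × Fin s) ℂ) -
          (krA B (1 : Matrix (Fin s) (Fin s) ℂ) * ((1 : Mat n) ⊗ₖ Y) *
            krA R (1 : Matrix (Fin t) (Fin t) ℂ)) *
          (krA B (1 : Matrix (Fin s) (Fin s) ℂ) * ((1 : Mat n) ⊗ₖ Y) *
            krA R (1 : Matrix (Fin t) (Fin t) ℂ))ᴴ
          = krA (1 - π) (1 : Matrix (Fin s) (Fin s) ℂ) +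
            (krA π (1 : Matrix (Fin s) (Fin s) ℂ) -
              (krA B (1 : Matrix (Fin s) (Fin s) ℂ) * ((1 : Mat n) ⊗ₖ Y) *
                krA R (1 : Matrix (Fin t) (Fin t) ℂ)) *
              (krA B (1 : Matrix (Fin s) (Fin s) ℂ) * ((1 : Mat n) ⊗ₖ Y) *
                krA R (1 : Matrix (Fin t) (Fin t) ℂ))ᴴ) := by
        rw [krA_sub, krA_one]
        abel
      rw [edec]
      exact hpsd1.add h2
    · intro h
      have h2 := h.mul_mul_conjTranspose_same (krA R (1 : Matrix (Fin s) (Fin s) ℂ))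
      have hRC : krA R (1 : Matrix (Fin s) (Fin s) ℂ) *
          (krA B (1 : Matrix (Fin s) (Fin s) ℂ) * ((1 : Mat n) ⊗ₖ Y) *
            krA R (1 : Matrix (Fin t) (Fin t) ℂ))
          = ((1 : Mat n) ⊗ₖ Y) * krA R (1 : Matrix (Fin t) (Fin t) ℂ) := by
        rw [← hNR]
        rw [show krA π (1 : Matrix (Fin s) (Fin s) ℂ)
            = krA R (1 : Matrix (Fin s) (Fin s) ℂ) * krA B (1 : Matrix (Fin s) (Fin s) ℂ) by
          rw [krA_mul, ← hπ]]
        simp only [Matrix.mul_assoc]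
      have e : krA R (1 : Matrix (Fin s) (Fin s) ℂ) *
          (1 - (krA B (1 : Matrix (Fin s) (Fin s) ℂ) * ((1 : Mat n) ⊗ₖ Y) *
            krA R (1 : Matrix (Fin t) (Fin t) ℂ)) *
          (krA B (1 : Matrix (Fin s) (Fin s) ℂ) * ((1 : Mat n) ⊗ₖ Y) *
            krA R (1 : Matrix (Fin t) (Fin t) ℂ))ᴴ) *
          (krA R (1 : Matrix (Fin s) (Fin s) ℂ))ᴴ
          = krA (pick X) (1 : Matrix (Fin s) (Fin s) ℂ) -
            ((1 : Mat n) ⊗ₖ Y) * krA (pick X) (1 : Matrix (Fin t) (Fin t) ℂ) *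
              ((1 : Mat n) ⊗ₖ Y)ᴴ := by
        rw [krA_conjT, hRH, Matrix.mul_sub, Matrix.sub_mul, Matrix.mul_one]
        congr 1
        · rw [krA_mul, hRR]
        · -- krA R 1 * (C * Cᴴ) * krA R 1 = N krA P 1 Nᴴ
          have hCRH : (krA B (1 : Matrix (Fin s) (Fin s) ℂ) * ((1 : Mat n) ⊗ₖ Y) *
              krA R (1 : Matrix (Fin t) (Fin t) ℂ))ᴴ * krA R (1 : Matrix (Fin s) (Fin s) ℂ)
              = krA R (1 : Matrix (Fin t) (Fin t) ℂ) * ((1 : Mat n) ⊗ₖ Y)ᴴ := by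
            have h3 := congrArg Matrix.conjTranspose hRC
            rw [Matrix.conjTranspose_mul, krA_conjT, hRH] at h3
            rw [h3, Matrix.conjTranspose_mul, krA_conjT, hRH]
          calc krA R (1 : Matrix (Fin s) (Fin s) ℂ) *
              ((krA B (1 : Matrix (Fin s) (Fin s) ℂ) * ((1 : Mat n) ⊗ₖ Y) *
                krA R (1 : Matrix (Fin t) (Fin t) ℂ)) *
              (krA B (1 : Matrix (Fin s) (Fin s) ℂ) * ((1 : Mat n) ⊗ₖ Y) *
                krA R (1 : Matrix (Fin t) (Fin t) ℂ))ᴴ) *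
              krA R (1 : Matrix (Fin s) (Fin s) ℂ)
              = (krA R (1 : Matrix (Fin s) (Fin s) ℂ) *
                  (krA B (1 : Matrix (Fin s) (Fin s) ℂ) * ((1 : Mat n) ⊗ₖ Y) *
                    krA R (1 : Matrix (Fin t) (Fin t) ℂ))) *
                ((krA B (1 : Matrix (Fin s) (Fin s) ℂ) * ((1 : Mat n) ⊗ₖ Y) *
                    krA R (1 : Matrix (Fin t) (Fin t) ℂ))ᴴ *
                  krA R (1 : Matrix (Fin s) (Fin s) ℂ)) := by
                simp only [Matrix.mul_assoc]
          _ = (((1 : Mat n) ⊗ₖ Y) * krA R (1 : Matrix (Fin t) (Fin t) ℂ)) *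
                (krA R (1 : Matrix (Fin t) (Fin t) ℂ) * ((1 : Mat n) ⊗ₖ Y)ᴴ) := by
                rw [hRC, hCRH]
          _ = ((1 : Mat n) ⊗ₖ Y) * krA (pick X) (1 : Matrix (Fin t) (Fin t) ℂ) *
                ((1 : Mat n) ⊗ₖ Y)ᴴ := by
                rw [show krA (pick X) (1 : Matrix (Fin t) (Fin t) ℂ)
                    = krA R (1 : Matrix (Fin t) (Fin t) ℂ) *
                      krA R (1 : Matrix (Fin t) (Fin t) ℂ) by rw [krA_mul, hRR]]
                simp only [Matrix.mul_assoc]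
      rw [e] at h2
      exact h2
end
end

section
/- Let X = (X₁,…,X_d) be a strict row contraction of n×n complex matrices and let s ≥ 1. Then for every H ∈ M_n(ℂ), B̆_sᵀ·(P_X ⊗ I_s ⊗ (H − Σᵢ₌₁^d Xᵢ H Xᵢ*))·B̆_s = H ⊗ I_s, where B̆_s denotes the ampliated boomerang matrix. -/
/-!
Common definitions: the ψ-involution, `vec`, the elementary Pick matrix, the Choi matrix,
Kronecker-product helpers with right-associated index types, the boomerang matrices, the
commutation matrix, and the Moore–Penrose predicate.
-/

open Matrix Filter
open scoped Kronecker Matrix.Norms.L2Operator ComplexOrder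

noncomputable section

set_option maxHeartbeats 1000000 in
lemma kron_one_opNorm_le {n : ℕ} (d : ℕ) (V : Mat n) :
    ‖(1 : Matrix (Fin d) (Fin d) ℂ) ⊗ₖ V‖ ≤ ‖V‖ := by
  rw [Matrix.l2_opNorm_def]
  apply ContinuousLinearMap.opNorm_le_bound _ (norm_nonneg V)
  intro x
  set y := (Matrix.toEuclideanLin ((1 : Matrix (Fin d) (Fin d) ℂ) ⊗ₖ V)) x with hy
  have hyv : ∀ p : Fin d × Fin n, y p = (V *ᵥ (fun b => x (p.1, b))) p.2 := by
    intro p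
    have : y p = (((1 : Matrix (Fin d) (Fin d) ℂ) ⊗ₖ V) *ᵥ (fun q => x q)) p := rfl
    rw [this]
    simp [Matrix.mulVec, dotProduct, Fintype.sum_prod_type, Matrix.kroneckerMap_apply,
      Matrix.one_apply, ite_mul]
  have hslice : ∀ i : Fin d,
      ∑ a : Fin n, ‖(V *ᵥ (fun b => x (i, b))) a‖ ^ 2 ≤
        ‖V‖ ^ 2 * ∑ b : Fin n, ‖x (i, b)‖ ^ 2 := by
    intro i
    set z : EuclideanSpace ℂ (Fin n) := WithLp.toLp 2 (fun b => x (i, b)) with hzdef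
    have h1 : ‖(EuclideanSpace.equiv (Fin n) ℂ).symm (V *ᵥ z)‖ ≤ ‖V‖ * ‖z‖ :=
      Matrix.l2_opNorm_mulVec V z
    have h2 : ‖(EuclideanSpace.equiv (Fin n) ℂ).symm (V *ᵥ z)‖ ^ 2 ≤ (‖V‖ * ‖z‖) ^ 2 :=
      pow_le_pow_left₀ (norm_nonneg _) h1 2
    have h3 : ‖(EuclideanSpace.equiv (Fin n) ℂ).symm (V *ᵥ z)‖ ^ 2
        = ∑ a, ‖(V *ᵥ z) a‖ ^ 2 := by
      rw [EuclideanSpace.norm_eq]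
      rw [Real.sq_sqrt (by positivity)]
      rfl
    have h4 : ‖z‖ ^ 2 = ∑ b, ‖z b‖ ^ 2 := by
      rw [EuclideanSpace.norm_eq, Real.sq_sqrt (by positivity)]
    rw [h3] at h2
    calc ∑ a : Fin n, ‖(V *ᵥ z) a‖ ^ 2 ≤ (‖V‖ * ‖z‖) ^ 2 := h2
      _ = ‖V‖ ^ 2 * ∑ b, ‖z b‖ ^ 2 := by rw [mul_pow, h4]
  have hnormy : ‖y‖ = Real.sqrt (∑ p : Fin d × Fin n, ‖y p‖ ^ 2) := EuclideanSpace.norm_eq y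
  have hnx : ‖x‖ = Real.sqrt (∑ p : Fin d × Fin n, ‖x p‖ ^ 2) := EuclideanSpace.norm_eq x
  have key : ∑ p : Fin d × Fin n, ‖y p‖ ^ 2 ≤ ‖V‖ ^ 2 * ∑ p : Fin d × Fin n, ‖x p‖ ^ 2 := by
    rw [Fintype.sum_prod_type, Fintype.sum_prod_type, Finset.mul_sum]
    apply Finset.sum_le_sum
    intro i _
    calc ∑ a, ‖y (i, a)‖ ^ 2 = ∑ a, ‖(V *ᵥ (fun b => x (i, b))) a‖ ^ 2 := by
          simp only [hyv]
      _ ≤ ‖V‖ ^ 2 * ∑ b, ‖x (i, b)‖ ^ 2 := hslice i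
  have hrfl : ‖((Matrix.toEuclideanLin ≪≫ₗ LinearMap.toContinuousLinearMap)
      ((1 : Matrix (Fin d) (Fin d) ℂ) ⊗ₖ V)) x‖ = ‖y‖ := rfl
  rw [hrfl, hnormy, hnx]
  calc Real.sqrt (∑ p : Fin d × Fin n, ‖y p‖ ^ 2)
      ≤ Real.sqrt (‖V‖ ^ 2 * ∑ p : Fin d × Fin n, ‖x p‖ ^ 2) := Real.sqrt_le_sqrt key
    _ = ‖V‖ * Real.sqrt (∑ p : Fin d × Fin n, ‖x p‖ ^ 2) := by
        rw [Real.sqrt_mul (by positivity), Real.sqrt_sq (norm_nonneg V)]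

def rowR {n d : ℕ} (X : Fin d → Mat n) : Matrix (Fin n) (Fin d × Fin n) ℂ :=
  Matrix.of fun a q => X q.1 a q.2

lemma rowR_mul_conjT {n d : ℕ} (X : Fin d → Mat n) :
    rowR X * (rowR X)ᴴ = ∑ i, X i * (X i)ᴴ := by
  ext a b
  simp [rowR, Matrix.mul_apply, Matrix.conjTranspose_apply, Fintype.sum_prod_type,
    Matrix.sum_apply]

lemma phi_eq {n d : ℕ} (X : Fin d → Mat n) (V : Mat n) :
    ∑ i, X i * V * (X i)ᴴ =
      rowR X * ((1 : Matrix (Fin d) (Fin d) ℂ) ⊗ₖ V) * (rowR X)ᴴ := by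
  ext a b
  simp only [Matrix.sum_apply, Matrix.mul_apply, Matrix.conjTranspose_apply, rowR,
    Matrix.of_apply, Matrix.kroneckerMap_apply, Matrix.one_apply, Fintype.sum_prod_type]
  apply Finset.sum_congr rfl
  intro x _
  apply Finset.sum_congr rfl
  intro y _
  congr 1
  rw [Finset.sum_comm]
  simp [mul_ite]

lemma phi_opNorm_le {n d : ℕ} (X : Fin d → Mat n) (V : Mat n) :
    ‖∑ i, X i * V * (X i)ᴴ‖ ≤ ‖∑ i, X i * (X i)ᴴ‖ * ‖V‖ := by
  rw [phi_eq, ← rowR_mul_conjT]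
  set R := rowR X
  set D := (1 : Matrix (Fin d) (Fin d) ℂ) ⊗ₖ V with hD
  have h1 : ‖R * D * Rᴴ‖ ≤ ‖R * D‖ * ‖Rᴴ‖ := Matrix.l2_opNorm_mul _ _
  have h2 : ‖R * D‖ ≤ ‖R‖ * ‖D‖ := Matrix.l2_opNorm_mul _ _
  have h3 : ‖Rᴴ‖ = ‖R‖ := Matrix.l2_opNorm_conjTranspose _
  have h4 : ‖D‖ ≤ ‖V‖ := kron_one_opNorm_le d V
  have h5 : ‖R * Rᴴ‖ = ‖R‖ * ‖R‖ := by
    have := Matrix.l2_opNorm_conjTranspose_mul_self Rᴴ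
    rwa [Matrix.conjTranspose_conjTranspose, h3] at this
  have hR : (0:ℝ) ≤ ‖R‖ := norm_nonneg _
  calc ‖R * D * Rᴴ‖ ≤ ‖R * D‖ * ‖Rᴴ‖ := h1
    _ ≤ (‖R‖ * ‖D‖) * ‖R‖ := by rw [h3]; exact mul_le_mul_of_nonneg_right h2 hR
    _ ≤ (‖R‖ * ‖V‖) * ‖R‖ := by
        apply mul_le_mul_of_nonneg_right _ hR
        exact mul_le_mul_of_nonneg_left h4 hR
    _ = ‖R * Rᴴ‖ * ‖V‖ := by rw [h5]; ring

lemma fixed_eq_zero {n d : ℕ} {X : Fin d → Mat n} (hX : ‖∑ i, X i * (X i)ᴴ‖ < 1)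
    (V : Mat n) (hV : V = ∑ i, X i * V * (X i)ᴴ) : V = 0 := by
  by_contra h
  have hv : 0 < ‖V‖ := norm_pos_iff.mpr h
  have hb := phi_opNorm_le X V
  rw [← hV] at hb
  nlinarith [norm_nonneg (∑ i, X i * (X i)ᴴ)]

lemma det_ne {n d : ℕ} {X : Fin d → Mat n} (hX : ‖∑ i, X i * (X i)ᴴ‖ < 1) :
    (1 - ∑ i, conjM (X i) ⊗ₖ X i).det ≠ 0 := by
  intro h
  obtain ⟨v, hv0, hv⟩ := (Matrix.exists_mulVec_eq_zero_iff).mpr h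
  set V : Mat n := Matrix.of (fun i i' => v (i', i)) with hVdef
  have hVfix : V = ∑ i, X i * V * (X i)ᴴ := by
    ext a b
    have h1 := congrFun hv (b, a)
    simp only [Matrix.sub_mulVec, Matrix.one_mulVec, Pi.sub_apply, Pi.zero_apply,
      sub_eq_zero] at h1
    rw [hVdef]
    simp only [Matrix.of_apply, Matrix.sum_apply, Matrix.mul_apply,
      Matrix.conjTranspose_apply]
    rw [h1]
    simp only [Matrix.mulVec, dotProduct, Matrix.sum_apply,
      Matrix.kroneckerMap_apply, conjM, Matrix.map_apply, Fintype.sum_prod_type]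
    simp only [Finset.sum_mul]
    calc ∑ x : Fin n, ∑ y : Fin n, ∑ k : Fin d,
            (starRingEnd ℂ) (X k b x) * X k a y * v (x, y)
        = ∑ x : Fin n, ∑ k : Fin d, ∑ y : Fin n,
            (starRingEnd ℂ) (X k b x) * X k a y * v (x, y) :=
          Finset.sum_congr rfl fun x _ => Finset.sum_comm
      _ = ∑ k : Fin d, ∑ x : Fin n, ∑ y : Fin n,
            (starRingEnd ℂ) (X k b x) * X k a y * v (x, y) := Finset.sum_comm
      _ = ∑ k : Fin d, ∑ x : Fin n, ∑ y : Fin n,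
            X k a y * v (x, y) * star (X k b x) := by
          apply Finset.sum_congr rfl; intro k _
          apply Finset.sum_congr rfl; intro x _
          apply Finset.sum_congr rfl; intro y _
          simp [RCLike.star_def]
          ring
  have hz := fixed_eq_zero hX V hVfix
  apply hv0
  funext p
  have hp : V p.2 p.1 = 0 := by rw [hz]; rfl
  simpa [hVdef] using hp

lemma boomAmp_apply (n r : ℕ) (p : Fin n × Fin n × Fin r × Fin n) (q : Fin n × Fin r) :
    boomAmp n r p q =
      if p.2.2.2 = p.1 ∧ p.2.1 = q.1 ∧ p.2.2.1 = q.2 then 1 else 0 := by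
  rcases p with ⟨i, j, a, k⟩
  rcases q with ⟨b, l⟩
  simp only [boomAmp, preBoom, commMat, Matrix.mul_apply, Matrix.of_apply,
    Fintype.sum_prod_type, ite_and]
  by_cases hk : k = i <;> simp [hk, ite_mul, mul_ite, Finset.sum_ite_eq', Finset.sum_ite_eq,
    eq_comm, and_comm]

lemma pick_key {n d : ℕ} {X : Fin d → Mat n} (hX : ‖∑ i, X i * (X i)ᴴ‖ < 1)
    (H : Mat n) (b b' : Fin n) :
    ∑ i : Fin n, ∑ i' : Fin n,
        pick X (i, b) (i', b') * (H - ∑ k, X k * H * (X k)ᴴ) i i' = H b b' := by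
  set Y := (1 : Matrix (Fin n × Fin n) (Fin n × Fin n) ℂ) - ∑ i, conjM (X i) ⊗ₖ X i with hY
  have hdet : IsUnit Y.det := isUnit_iff_ne_zero.mpr (det_ne hX)
  set hv : Fin n × Fin n → ℂ := fun p => H p.2 p.1 with hhv
  have h1 : Y *ᵥ hv = fun q => (H - ∑ k, X k * H * (X k)ᴴ) q.2 q.1 := by
    funext q
    rcases q with ⟨i', i⟩
    simp only [hY, Matrix.sub_mulVec, Matrix.one_mulVec, Pi.sub_apply, Matrix.sub_apply,
      Matrix.sum_apply, Matrix.mul_apply, Matrix.conjTranspose_apply, hhv]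
    congr 1
    simp only [Matrix.mulVec, dotProduct, Matrix.sum_apply,
      Matrix.kroneckerMap_apply, conjM, Matrix.map_apply, Fintype.sum_prod_type]
    simp only [Finset.sum_mul]
    calc ∑ x : Fin n, ∑ y : Fin n, ∑ k : Fin d,
            (starRingEnd ℂ) (X k i' x) * X k i y * hv (x, y)
        = ∑ x : Fin n, ∑ k : Fin d, ∑ y : Fin n,
            (starRingEnd ℂ) (X k i' x) * X k i y * hv (x, y) :=
          Finset.sum_congr rfl fun x _ => Finset.sum_comm
      _ = ∑ k : Fin d, ∑ x : Fin n, ∑ y : Fin n,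
            (starRingEnd ℂ) (X k i' x) * X k i y * hv (x, y) := Finset.sum_comm
      _ = ∑ k : Fin d, ∑ x : Fin n, ∑ y : Fin n,
            X k i y * H y x * star (X k i' x) := by
          apply Finset.sum_congr rfl; intro k _
          apply Finset.sum_congr rfl; intro x _
          apply Finset.sum_congr rfl; intro y _
          simp [RCLike.star_def, hhv]
          ring
  have h2 : Y⁻¹ *ᵥ (Y *ᵥ hv) = hv := by
    rw [Matrix.mulVec_mulVec, Matrix.nonsing_inv_mul Y hdet, Matrix.one_mulVec]
  have h3 := congrFun h2 (b', b)
  rw [h1] at h3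
  simp only [Matrix.mulVec, dotProduct, Fintype.sum_prod_type, hhv] at h3
  rw [← h3]
  rw [Finset.sum_comm]
  apply Finset.sum_congr rfl
  intro i' _
  apply Finset.sum_congr rfl
  intro i _
  rfl

/-- For a strict row contraction `X`, `s ≥ 1`, and every `H ∈ M_n(ℂ)`,
`B̆_sᵀ·(P_X ⊗ I_s ⊗ (H − Σᵢ Xᵢ H Xᵢ*))·B̆_s = H ⊗ I_s`. -/
theorem ampliated_boomerang_pick_compression {n d s : ℕ} (hs : 1 ≤ s)
    (X : Fin d → Mat n) (hX : StrictRowContraction X) (H : Mat n) :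
    (boomAmp n s)ᵀ *
        krT (krA (pick X) (1 : Matrix (Fin s) (Fin s) ℂ)) (H - ∑ i, X i * H * (X i)ᴴ) *
        boomAmp n s =
      H ⊗ₖ (1 : Matrix (Fin s) (Fin s) ℂ) := by
  have hX' : ‖∑ i, X i * (X i)ᴴ‖ < 1 := hX
  ext ⟨b, l⟩ ⟨b', l'⟩
  simp only [Matrix.mul_apply, Matrix.transpose_apply, boomAmp_apply, krT, krA,
    Matrix.of_apply, Matrix.kroneckerMap_apply, Fintype.sum_prod_type, ite_mul, mul_ite,
    zero_mul, mul_zero, one_mul, mul_one, Finset.sum_ite_eq, Finset.sum_ite_eq',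
    Finset.mem_univ, if_true]
  simp only [Matrix.one_apply, ite_and, mul_ite, mul_zero, mul_one, ite_mul, zero_mul,
    Finset.sum_ite_eq, Finset.sum_ite_eq', Finset.mem_univ, if_true, Finset.sum_ite_irrel,
    Finset.sum_const_zero]
  split_ifs with hll
  · rw [Finset.sum_comm]
    exact pick_key hX' H b b'
  · rfl
end
end
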